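/- arXiv:1407.2083 — 3 statements merged into one kernel-verified Lean document; each statement's English description precedes it below -/
import Mathlib

section
/- As α → 0⁺, V(α) is comparable to α |log α|: there exist constants 0 < c ≤ C < ∞ and α₀ > 0 such that c · α |log α| ≤ V(α) ≤ C · α |log α| for all 0 < α < α₀. -/
open MeasureTheory Real Set

/-- `V a = (4/π²) ∫₀^∞ ∫₀^{a x} 1/((1+x²)(1+y²)) dy dx`. -/
noncomputable def V (a : ℝ) : ℝ :=
  (4 / Real.pi ^ 2) *
    ∫ x in Set.Ioi (0 : ℝ), (∫ y in (0 : ℝ)..(a * x), (1 + y ^ 2)⁻¹) * (1 + x ^ 2)⁻¹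

private lemma cont_inv_one_add_sq : Continuous fun x : ℝ => (1 + x ^ 2)⁻¹ :=
  (continuous_const.add (continuous_pow 2)).inv₀ (fun x => (by positivity : (1:ℝ) + x ^ 2 ≠ 0))

private lemma my_arctan_le_self {t : ℝ} (ht : 0 ≤ t) : Real.arctan t ≤ t := by
  have h := integral_inv_one_add_sq (a := (0:ℝ)) (b := t)
  rw [Real.arctan_zero, sub_zero] at h
  rw [← h]
  calc (∫ x in (0:ℝ)..t, (1 + x ^ 2)⁻¹) ≤ ∫ _x in (0:ℝ)..t, (1:ℝ) := by
        apply intervalIntegral.integral_mono_on ht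
          (cont_inv_one_add_sq.intervalIntegrable _ _) intervalIntegrable_const
        intro x _
        have h1 : (1:ℝ) ≤ 1 + x ^ 2 := by nlinarith
        simpa using inv_anti₀ one_pos h1
    _ = t := by simp

private lemma my_half_le_arctan {t : ℝ} (ht : 0 ≤ t) (ht1 : t ≤ 1) :
    t / 2 ≤ Real.arctan t := by
  have h := integral_inv_one_add_sq (a := (0:ℝ)) (b := t)
  rw [Real.arctan_zero, sub_zero] at h
  rw [← h]
  calc t / 2 = ∫ _x in (0:ℝ)..t, (2:ℝ)⁻¹ := by simp; ring
    _ ≤ ∫ x in (0:ℝ)..t, (1 + x ^ 2)⁻¹ := by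
        apply intervalIntegral.integral_mono_on ht intervalIntegrable_const
          (cont_inv_one_add_sq.intervalIntegrable _ _)
        intro x hx
        rcases hx with ⟨hx0, hx1⟩
        have hx2 : x ≤ 1 := le_trans hx1 ht1
        have h2 : 1 + x ^ 2 ≤ 2 := by nlinarith
        exact inv_anti₀ (by positivity) h2

private lemma my_integral_x (a b : ℝ) :
    ∫ x in a..b, x * (1 + x ^ 2)⁻¹ =
      (Real.log (1 + b ^ 2) - Real.log (1 + a ^ 2)) / 2 := by
  have key : ∀ x : ℝ, HasDerivAt (fun y : ℝ => Real.log (1 + y ^ 2) / 2)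
      (x * (1 + x ^ 2)⁻¹) x := by
    intro x
    have h1 : HasDerivAt (fun y : ℝ => 1 + y ^ 2) (2 * x) x := by
      simpa using ((hasDerivAt_pow 2 x).const_add 1)
    have h2 := (h1.log (by positivity)).div_const 2
    refine h2.congr_deriv ?_
    ring
  rw [intervalIntegral.integral_eq_sub_of_hasDerivAt (fun x _ => key x)
    ((continuous_id.mul cont_inv_one_add_sq).intervalIntegrable a b)]
  ring

theorem statement_3 :
    ∃ c C α₀ : ℝ, 0 < c ∧ c ≤ C ∧ 0 < α₀ ∧
      ∀ α : ℝ, 0 < α → α < α₀ →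
        c * (α * |Real.log α|) ≤ V α ∧ V α ≤ C * (α * |Real.log α|) := by
  refine ⟨1/10, 2, 1/2, by norm_num, by norm_num, by norm_num, ?_⟩
  intro α hα hα2
  set m : ℝ := α⁻¹ with hm_def
  have hm0 : 0 < m := inv_pos.mpr hα
  have hm2 : 2 < m := by
    rw [hm_def]
    rw [lt_inv_comm₀ (by norm_num) hα]
    linarith
  have hm1 : (1:ℝ) ≤ m := by linarith
  set L : ℝ := -Real.log α with hL_def
  have hlogα : Real.log α < 0 := Real.log_neg hα (by linarith)
  have habs : |Real.log α| = L := abs_of_neg hlogα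
  have hL2 : Real.log 2 ≤ L := by
    rw [hL_def, ← Real.log_inv]
    exact Real.log_le_log (by norm_num) (by rw [← hm_def]; linarith)
  have hlog2 : (0.6931471803 : ℝ) < Real.log 2 := Real.log_two_gt_d9
  have hL0 : 0 < L := by linarith
  have hlogm : Real.log m = L := by rw [hm_def, Real.log_inv]
  -- the integrand after computing the inner integral
  set f : ℝ → ℝ := fun x => Real.arctan (α * x) * (1 + x ^ 2)⁻¹ with hf_def
  have hV : V α = (4 / Real.pi ^ 2) * ∫ x in Set.Ioi (0:ℝ), f x := by
    unfold V
    simp only [integral_inv_one_add_sq, Real.arctan_zero, sub_zero, hf_def]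
  have hf_cont : Continuous f :=
    (Real.continuous_arctan.comp (continuous_const.mul continuous_id)).mul cont_inv_one_add_sq
  have hf_int : IntegrableOn f (Set.Ioi (0:ℝ)) := by
    apply Integrable.mono' ((integrable_inv_one_add_sq.const_mul (π/2)).integrableOn)
      hf_cont.aestronglyMeasurable.restrict
    filter_upwards with x
    rw [hf_def]
    simp only [norm_mul, Real.norm_eq_abs]
    have h1 : |Real.arctan (α * x)| ≤ π / 2 :=
      le_of_lt (abs_lt.mpr ⟨Real.neg_pi_div_two_lt_arctan _, Real.arctan_lt_pi_div_two _⟩)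
    have h2 : |(1 + x ^ 2)⁻¹| = (1 + x ^ 2)⁻¹ := abs_of_pos (by positivity)
    rw [h2]
    exact mul_le_mul_of_nonneg_right h1 (by positivity)
  have hf_nonneg : ∀ x ∈ Set.Ioi (0:ℝ), 0 ≤ f x := by
    intro x hx
    rw [hf_def]
    have : 0 ≤ Real.arctan (α * x) := by
      rw [← Real.arctan_zero]
      exact Real.arctan_strictMono.monotone (le_of_lt (mul_pos hα hx))
    positivity
  constructor
  · -- lower bound
    have step1 : ∫ x in Set.Ioc (1:ℝ) m, f x ≤ ∫ x in Set.Ioi (0:ℝ), f x := by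
      apply setIntegral_mono_set hf_int
      · filter_upwards [ae_restrict_mem measurableSet_Ioi] with x hx using hf_nonneg x hx
      · filter_upwards with x hx
        exact lt_trans one_pos hx.1
    have step2 : ∫ x in Set.Ioc (1:ℝ) m, (α/2) * (x * (1 + x ^ 2)⁻¹)
        ≤ ∫ x in Set.Ioc (1:ℝ) m, f x := by
      apply setIntegral_mono_on
      · exact ((continuous_const.mul (continuous_id.mul
          cont_inv_one_add_sq)).integrableOn_Ioc)
      · exact hf_int.mono_set (fun x hx => lt_trans one_pos hx.1)
      · exact measurableSet_Ioc
      · intro x hx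
        rcases hx with ⟨hx1, hxm⟩
        have hax0 : 0 ≤ α * x := by positivity
        have hax1 : α * x ≤ 1 := by
          have := mul_le_mul_of_nonneg_left hxm hα.le
          rwa [mul_inv_cancel₀ hα.ne'] at this
        have harc : (α * x) / 2 ≤ Real.arctan (α * x) := my_half_le_arctan hax0 hax1
        rw [hf_def]
        have := mul_le_mul_of_nonneg_right harc (show (0:ℝ) ≤ (1 + x ^ 2)⁻¹ by positivity)
        calc (α/2) * (x * (1 + x ^ 2)⁻¹) = ((α * x)/2) * (1 + x ^ 2)⁻¹ := by ring
          _ ≤ Real.arctan (α * x) * (1 + x ^ 2)⁻¹ := this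
    have step3 : ∫ x in Set.Ioc (1:ℝ) m, (α/2) * (x * (1 + x ^ 2)⁻¹)
        = (α/2) * ((Real.log (1 + m ^ 2) - Real.log 2) / 2) := by
      rw [← intervalIntegral.integral_of_le hm1, intervalIntegral.integral_const_mul,
        my_integral_x]
      norm_num
    have hlogm2 : 2 * L ≤ Real.log (1 + m ^ 2) := by
      have h1 : Real.log (m ^ 2) ≤ Real.log (1 + m ^ 2) :=
        Real.log_le_log (by positivity) (by linarith)
      rw [Real.log_pow] at h1
      rw [hlogm] at h1
      push_cast at h1
      linarith
    have hI : (α/4) * L ≤ ∫ x in Set.Ioi (0:ℝ), f x := by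
      have : (α/4) * L ≤ (α/2) * ((Real.log (1 + m ^ 2) - Real.log 2) / 2) := by
        have : L ≤ Real.log (1 + m ^ 2) - Real.log 2 := by linarith
        nlinarith
      linarith [step1, step2.trans step1, step3 ▸ step2]
    rw [hV, habs]
    have hπ : Real.pi ^ 2 ≤ 10 := by nlinarith [Real.pi_lt_d2, Real.pi_gt_three]
    have hπ0 : (0:ℝ) < Real.pi ^ 2 := by positivity
    have h45 : (2/5 : ℝ) ≤ 4 / Real.pi ^ 2 := by
      rw [le_div_iff₀ hπ0]; linarith
    calc (1/10) * (α * L) = (2/5) * ((α/4) * L) := by ring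
      _ ≤ (4 / Real.pi ^ 2) * ((α/4) * L) :=
          mul_le_mul_of_nonneg_right h45 (by positivity)
      _ ≤ (4 / Real.pi ^ 2) * ∫ x in Set.Ioi (0:ℝ), f x :=
          mul_le_mul_of_nonneg_left hI (by positivity)
  · -- upper bound
    have hsplit : ∫ x in Set.Ioi (0:ℝ), f x =
        (∫ x in Set.Ioc (0:ℝ) m, f x) + ∫ x in Set.Ioi m, f x := by
      rw [← Set.Ioc_union_Ioi_eq_Ioi hm0.le]
      exact setIntegral_union (Set.Ioc_disjoint_Ioi le_rfl) measurableSet_Ioi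
        (hf_int.mono_set (Set.Ioc_subset_Ioi_self.trans (by simp)))
        (hf_int.mono_set (fun x hx => lt_trans hm0 hx))
    have piece1 : ∫ x in Set.Ioc (0:ℝ) m, f x ≤ (3/2) * (α * L) := by
      have h1 : ∫ x in Set.Ioc (0:ℝ) m, f x ≤
          ∫ x in Set.Ioc (0:ℝ) m, α * (x * (1 + x ^ 2)⁻¹) := by
        apply setIntegral_mono_on
        · exact hf_int.mono_set Set.Ioc_subset_Ioi_self
        · exact ((continuous_const.mul (continuous_id.mul
            cont_inv_one_add_sq)).integrableOn_Ioc)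
        · exact measurableSet_Ioc
        · intro x hx
          have hx0 : 0 < x := hx.1
          have harc : Real.arctan (α * x) ≤ α * x := my_arctan_le_self (by positivity)
          rw [hf_def]
          calc Real.arctan (α * x) * (1 + x ^ 2)⁻¹ ≤ (α * x) * (1 + x ^ 2)⁻¹ :=
              mul_le_mul_of_nonneg_right harc (by positivity)
            _ = α * (x * (1 + x ^ 2)⁻¹) := by ring
      have h2 : ∫ x in Set.Ioc (0:ℝ) m, α * (x * (1 + x ^ 2)⁻¹)
          = α * (Real.log (1 + m ^ 2) / 2) := by
        rw [← intervalIntegral.integral_of_le hm0.le, intervalIntegral.integral_const_mul,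
          my_integral_x]
        norm_num
      have h3 : Real.log (1 + m ^ 2) ≤ Real.log 2 + 2 * L := by
        have : Real.log (1 + m ^ 2) ≤ Real.log (2 * m ^ 2) :=
          Real.log_le_log (by positivity) (by nlinarith)
        rw [Real.log_mul (by norm_num) (by positivity), Real.log_pow, hlogm] at this
        push_cast at this
        linarith
      have h4 : α * (Real.log (1 + m ^ 2) / 2) ≤ (3/2) * (α * L) := by
        have : Real.log (1 + m ^ 2) ≤ 3 * L := by linarith
        nlinarith
      linarith [h2 ▸ h1]
    have piece2 : ∫ x in Set.Ioi m, f x ≤ (π/2) * α := by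
      have h1 : ∫ x in Set.Ioi m, f x ≤ ∫ x in Set.Ioi m, (π/2) * (1 + x ^ 2)⁻¹ := by
        apply setIntegral_mono_on
        · exact hf_int.mono_set (fun x hx => lt_trans hm0 hx)
        · exact (integrable_inv_one_add_sq.const_mul (π/2)).integrableOn
        · exact measurableSet_Ioi
        · intro x _
          rw [hf_def]
          exact mul_le_mul_of_nonneg_right
            (le_of_lt (Real.arctan_lt_pi_div_two _)) (by positivity)
      have h2 : ∫ x in Set.Ioi m, (π/2) * (1 + x ^ 2)⁻¹ = (π/2) * (π/2 - Real.arctan m) := by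
        rw [MeasureTheory.integral_const_mul, integral_Ioi_inv_one_add_sq]
      have h3 : π/2 - Real.arctan m ≤ α := by
        rw [← Real.arctan_inv_of_pos hm0, hm_def, inv_inv]
        exact my_arctan_le_self hα.le
      calc ∫ x in Set.Ioi m, f x ≤ (π/2) * (π/2 - Real.arctan m) := h2 ▸ h1
        _ ≤ (π/2) * α := mul_le_mul_of_nonneg_left h3 (by positivity)
    rw [hV, habs]
    have hπ : Real.pi ^ 2 ≥ 8 := by nlinarith [Real.pi_gt_three]
    have hπ0 : (0:ℝ) < Real.pi ^ 2 := by positivity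
    have h12 : 4 / Real.pi ^ 2 ≤ (1/2 : ℝ) := by
      rw [div_le_iff₀ hπ0]; linarith
    have hI : ∫ x in Set.Ioi (0:ℝ), f x ≤ (3/2) * (α * L) + (π/2) * α := by
      rw [hsplit]; linarith
    have hInonneg : 0 ≤ ∫ x in Set.Ioi (0:ℝ), f x :=
      setIntegral_nonneg measurableSet_Ioi hf_nonneg
    have hπ315 : π < 3.15 := Real.pi_lt_d2
    have hαL2 : α ≤ (3/2) * (α * L) := by
      have h1 : (1:ℝ) ≤ (3/2) * L := by linarith
      calc α = α * 1 := by ring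
        _ ≤ α * ((3/2) * L) := mul_le_mul_of_nonneg_left h1 hα.le
        _ = (3/2) * (α * L) := by ring
    have hπα : (π/2) * α ≤ (3.15/2) * ((3/2) * (α * L)) := by
      calc (π/2) * α ≤ (3.15/2) * α :=
            mul_le_mul_of_nonneg_right (by linarith) hα.le
        _ ≤ (3.15/2) * ((3/2) * (α * L)) :=
            mul_le_mul_of_nonneg_left hαL2 (by norm_num)
    calc (4 / Real.pi ^ 2) * ∫ x in Set.Ioi (0:ℝ), f x
        ≤ (1/2) * ((3/2) * (α * L) + (π/2) * α) := by
          apply mul_le_mul h12 hI hInonneg (by norm_num)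
      _ ≤ 2 * (α * L) := by linarith [mul_pos hα hL0]
end

section
/- Let α be as in the setting and let D = {n ∈ ℕ : α(t_n) > (log log t_n)^{−2}} with t_n = exp(e^n). If ∫^∞ α(t)|log α(t)|/(t log t) dt = ∞, then Σ_{n ∈ D} α(t_n)|log α(t_n)| = ∞; in particular Σ_{n ∉ D} α(t_n)|log α(t_n)| < ∞ always holds. -/
open MeasureTheory Real Set Filter

lemma xlog_le (x : ℝ) (hx : 0 < x) (hx1 : x ≤ 1) :
    x * |Real.log x| ≤ 4 * x ^ (3/4 : ℝ) := by
  have hlx : Real.log x ≤ 0 := Real.log_nonpos hx.le hx1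
  rw [abs_of_nonpos hlx]
  have h4 : -Real.log x ≤ 4 * (x ^ (1/4 : ℝ))⁻¹ := by
    have hq : (0:ℝ) < x ^ (1/4 : ℝ) := Real.rpow_pos_of_pos hx _
    have := Real.log_le_sub_one_of_pos (inv_pos.2 hq)
    rw [Real.log_inv] at this
    have hlog : Real.log (x ^ (1/4:ℝ)) = (1/4:ℝ) * Real.log x := Real.log_rpow hx _
    nlinarith [this, hlog, inv_pos.2 hq]
  have hxpos : 0 ≤ x := hx.le
  calc x * -Real.log x ≤ x * (4 * (x ^ (1/4:ℝ))⁻¹) := by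
        exact mul_le_mul_of_nonneg_left h4 hxpos
    _ = 4 * (x * (x ^ (1/4:ℝ))⁻¹) := by ring
    _ = 4 * x ^ (3/4:ℝ) := by
        rw [← Real.rpow_neg_one (x ^ (1/4:ℝ)), ← Real.rpow_mul hxpos]
        nth_rewrite 1 [← Real.rpow_one x]
        rw [← Real.rpow_add hx]
        norm_num

lemma partB (α : ℝ → ℝ) (hpos : ∀ t > 0, 0 < α t)
    (t : ℕ → ℝ) (ht : ∀ n, t n = Real.exp (Real.exp n))
    (D : Set ℕ) (hD : D = {n : ℕ | (Real.log (Real.log (t n)) ^ 2)⁻¹ < α (t n)}) :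
    Summable (fun n : ↥Dᶜ => α (t n) * |Real.log (α (t n))|) := by
  have htpos : ∀ n, 0 < t n := fun n => by rw [ht]; exact Real.exp_pos _
  have hloglog : ∀ n : ℕ, Real.log (Real.log (t n)) = n := fun n => by
    rw [ht, Real.log_exp, Real.log_exp]
  -- key bound for n in Dᶜ
  have hkey : ∀ n : ℕ, n ∈ Dᶜ → α (t n) * |Real.log (α (t n))| ≤ 4 * (n:ℝ) ^ (-(3/2) : ℝ) := by
    intro n hn
    have hle : α (t n) ≤ ((n:ℝ) ^ 2)⁻¹ := by
      have := hn
      rw [Set.mem_compl_iff, hD, Set.mem_setOf_eq, not_lt, hloglog] at this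
      exact this
    have hapos : 0 < α (t n) := hpos _ (htpos n)
    have hn0 : n ≠ 0 := by
      rintro rfl
      simp at hle
      exact absurd hle (not_le.2 hapos)
    have hn1 : (1:ℝ) ≤ n := by exact_mod_cast Nat.one_le_iff_ne_zero.2 hn0
    have hnpos : (0:ℝ) < n := by linarith
    have hinv1 : ((n:ℝ) ^ 2)⁻¹ ≤ 1 := by
      rw [inv_le_one_iff₀]; right; nlinarith
    have h1 : α (t n) ≤ 1 := hle.trans hinv1
    calc α (t n) * |Real.log (α (t n))| ≤ 4 * α (t n) ^ (3/4 : ℝ) :=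
          xlog_le _ hapos h1
      _ ≤ 4 * (((n:ℝ) ^ 2)⁻¹) ^ (3/4 : ℝ) := by
          have := Real.rpow_le_rpow hapos.le hle (by norm_num : (0:ℝ) ≤ 3/4)
          linarith
      _ = 4 * (n:ℝ) ^ (-(3/2) : ℝ) := by
          rw [← Real.rpow_natCast (n:ℝ) 2, ← Real.rpow_neg (Nat.cast_nonneg n),
            ← Real.rpow_mul (Nat.cast_nonneg n)]
          norm_num
  have hsum : Summable (fun n : ℕ => 4 * (n:ℝ) ^ (-(3/2) : ℝ)) :=
    (Real.summable_nat_rpow.2 (by norm_num)).mul_left 4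
  refine Summable.of_nonneg_of_le (fun n => ?_) (fun n => hkey n n.2) (hsum.subtype _)
  exact mul_nonneg (hpos _ (htpos _)).le (abs_nonneg _)

theorem statement_7 (α : ℝ → ℝ)
    (hpos : ∀ t > 0, 0 < α t)
    (hmono : AntitoneOn α (Set.Ioi 0))
    (hlim : Tendsto α atTop (nhds 0))
    (hreg : ∀ᶠ t in atTop, α t ≤ 2 * α (t ^ Real.exp 1))
    (t : ℕ → ℝ) (ht : ∀ n, t n = Real.exp (Real.exp n))
    (D : Set ℕ) (hD : D = {n : ℕ | (Real.log (Real.log (t n)) ^ 2)⁻¹ < α (t n)}) :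
    ((¬ ∃ T > Real.exp 1,
        IntegrableOn (fun s => α s * |Real.log (α s)| / (s * Real.log s)) (Set.Ici T)) →
      ¬ Summable (fun n : D => α (t n) * |Real.log (α (t n))|)) ∧
    Summable (fun n : ↥Dᶜ => α (t n) * |Real.log (α (t n))|) := by
  have part2 := partB α hpos t ht D hD
  refine ⟨?_, part2⟩
  intro hni hs
  apply hni
  set f : ℝ → ℝ := fun s => α s * |Real.log (α s)| / (s * Real.log s) with hf_def
  set b : ℕ → ℝ := fun n => α (t n) * |Real.log (α (t n))| with hb_def
  set c : ℕ → ℝ := fun n => α (t n) * (|Real.log (α (t n))| + Real.log 2) with hc_def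
  -- basic facts about t
  have htpos : ∀ n, 0 < t n := fun n => by rw [ht]; exact Real.exp_pos _
  have ht1 : ∀ n, 1 < t n := fun n => by
    rw [ht]
    calc (1:ℝ) = Real.exp 0 := Real.exp_zero.symm
      _ < Real.exp (Real.exp n) := Real.exp_lt_exp.2 (Real.exp_pos _)
  have hlogt : ∀ n, Real.log (t n) = Real.exp n := fun n => by rw [ht, Real.log_exp]
  have htmono : Monotone t := fun a b hab => by
    rw [ht, ht]
    exact Real.exp_le_exp.2 (Real.exp_le_exp.2 (by exact_mod_cast hab))
  have htpow : ∀ n, t n ^ Real.exp 1 = t (n + 1) := fun n => by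
    rw [ht, ht, ← Real.exp_mul, ← Real.exp_add]
    push_cast
    ring_nf
  have httop : Tendsto t atTop atTop := by
    have : Tendsto (fun n : ℕ => Real.exp (Real.exp n)) atTop atTop :=
      Real.tendsto_exp_atTop.comp (Real.tendsto_exp_atTop.comp
        tendsto_natCast_atTop_atTop)
    exact this.congr fun n => (ht n).symm
  -- thresholds
  have h1 : ∀ᶠ s in atTop, α s ≤ 2 * α (s ^ Real.exp 1) ∧ α s < Real.exp (-1) :=
    hreg.and (hlim.eventually (gt_mem_nhds (Real.exp_pos _)))
  obtain ⟨R, hR⟩ := eventually_atTop.1 h1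
  obtain ⟨N, hN⟩ := ((httop.eventually_ge_atTop R).and (eventually_ge_atTop 1)).exists
  obtain ⟨hNR, hN1⟩ := hN
  have htR : ∀ n, N ≤ n → R ≤ t n := fun n hn => hNR.trans (htmono hn)
  have hα2 : ∀ n, N ≤ n → α (t n) ≤ 2 * α (t (n + 1)) := fun n hn => by
    have := (hR _ (htR n hn)).1
    rwa [htpow] at this
  have hαsmall : ∀ n, N ≤ n → α (t n) < Real.exp (-1) := fun n hn => (hR _ (htR n hn)).2
  have hlogneg : ∀ n, N ≤ n → Real.log (α (t n)) ≤ -1 := fun n hn => by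
    have h := Real.log_le_log (hpos _ (htpos n)) (hαsmall n hn).le
    rwa [Real.log_exp] at h
  -- pointwise bound
  have hfb : ∀ n, N ≤ n → ∀ x ∈ Set.Ico (t n) (t (n + 1)),
      f x ≤ c n * (x * Real.log x)⁻¹ := by
    intro n hn x hx
    have hxpos : 0 < x := (htpos n).trans_le hx.1
    have hlx : 1 ≤ Real.log x := by
      have h := Real.log_le_log (htpos n) hx.1
      rw [hlogt] at h
      have : (1:ℝ) ≤ Real.exp n := by
        calc (1:ℝ) ≤ (n:ℝ) + 1 := le_add_of_nonneg_left (Nat.cast_nonneg n)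
          _ ≤ Real.exp n := Real.add_one_le_exp _
      linarith
    have hxlx : 0 < x * Real.log x := mul_pos hxpos (by linarith)
    have hax : 0 < α x := hpos x hxpos
    have haN : 0 < α (t n) := hpos _ (htpos n)
    have haN1 : 0 < α (t (n + 1)) := hpos _ (htpos (n + 1))
    have hale : α x ≤ α (t n) :=
      hmono (Set.mem_Ioi.2 (htpos n)) (Set.mem_Ioi.2 hxpos) hx.1
    have hage : α (t (n + 1)) ≤ α x :=
      hmono (Set.mem_Ioi.2 hxpos) (Set.mem_Ioi.2 (htpos (n + 1))) hx.2.le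
    have hhalf : α (t n) / 2 ≤ α x := by
      have := hα2 n hn; linarith
    have hαx1 : α x < Real.exp (-1) := hale.trans_lt (hαsmall n hn)
    have hlogxneg : Real.log (α x) ≤ -1 := by
      have h := Real.log_le_log hax hαx1.le
      rwa [Real.log_exp] at h
    have habs : |Real.log (α x)| = -Real.log (α x) := abs_of_nonpos (by linarith)
    have habsN : |Real.log (α (t n))| = -Real.log (α (t n)) :=
      abs_of_nonpos (by linarith [hlogneg n hn])
    have hb1 : Real.log (α (t n) / 2) ≤ Real.log (α x) :=
      Real.log_le_log (by positivity) hhalf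
    have hb2 : Real.log (α (t n) / 2) = Real.log (α (t n)) - Real.log 2 :=
      Real.log_div (ne_of_gt haN) two_ne_zero
    have hnum : α x * |Real.log (α x)| ≤ c n := by
      simp only [habs, hc_def, habsN]
      have habs_le : -Real.log (α x) ≤ -Real.log (α (t n)) + Real.log 2 := by
        rw [hb2] at hb1; linarith
      have h0 : 0 ≤ -Real.log (α x) := by linarith
      nlinarith [mul_le_mul hale habs_le h0 haN.le]
    rw [hf_def]
    simp only [div_eq_mul_inv]
    exact mul_le_mul_of_nonneg_right hnum (inv_nonneg.2 hxlx.le)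
  -- nonnegativity of f on positive reals
  have hfnonneg : ∀ x : ℝ, 1 < x → 0 ≤ f x := by
    intro x hx
    have hxpos : (0:ℝ) < x := by linarith
    have h3 : 0 < Real.log x := Real.log_pos hx
    have h2 := hpos x hxpos
    simp only [hf_def]
    exact div_nonneg (mul_nonneg h2.le (abs_nonneg _)) (by positivity)
  -- continuity of 1/(x log x) away from trouble
  have hcont : ∀ n, ContinuousOn (fun x : ℝ => (x * Real.log x)⁻¹)
      (Set.Icc (t n) (t (n + 1))) := by
    intro n
    apply ContinuousOn.inv₀
    · exact continuousOn_id.mul (Real.continuousOn_log.mono (fun x hx => by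
        simp only [Set.mem_compl_iff, Set.mem_singleton_iff]
        have : 0 < x := (htpos n).trans_le hx.1
        exact ne_of_gt this))
    · intro x hx
      have hxpos : 1 < x := (ht1 n).trans_le hx.1
      have : 0 < Real.log x := Real.log_pos hxpos
      positivity
  -- integral of 1/(x log x) over each block is 1
  have hIint : ∀ n, ∫ x in Set.Ico (t n) (t (n + 1)), (x * Real.log x)⁻¹ = 1 := by
    intro n
    have hle : t n ≤ t (n + 1) := htmono (Nat.le_succ n)
    have huIcc : Set.uIcc (t n) (t (n + 1)) = Set.Icc (t n) (t (n + 1)) :=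
      Set.uIcc_of_le hle
    have hderiv : ∀ x ∈ Set.uIcc (t n) (t (n + 1)),
        HasDerivAt (fun y => Real.log (Real.log y)) ((x * Real.log x)⁻¹) x := by
      intro x hx
      rw [huIcc] at hx
      have h1x : 1 < x := (ht1 n).trans_le hx.1
      have hlx : 0 < Real.log x := Real.log_pos h1x
      have h := (Real.hasDerivAt_log (ne_of_gt hlx)).comp x
        (Real.hasDerivAt_log (by positivity))
      have heq : (Real.log x)⁻¹ * x⁻¹ = (x * Real.log x)⁻¹ := by
        rw [mul_inv]; ring
      rw [heq] at h
      exact h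
    have hint : IntervalIntegrable (fun x => (x * Real.log x)⁻¹) volume (t n) (t (n + 1)) := by
      apply ContinuousOn.intervalIntegrable
      rw [huIcc]
      exact hcont n
    rw [MeasureTheory.integral_Ico_eq_integral_Ioo, ← MeasureTheory.integral_Ioc_eq_integral_Ioo,
      ← intervalIntegral.integral_of_le hle,
      intervalIntegral.integral_eq_sub_of_hasDerivAt hderiv hint]
    rw [hlogt, hlogt, Real.log_exp, Real.log_exp]
    push_cast
    ring
  -- measurability of f on each block
  have hsub : ∀ n, Set.Ico (t n) (t (n + 1)) ⊆ Set.Ioi (0:ℝ) := fun n x hx =>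
    Set.mem_Ioi.2 ((htpos n).trans_le hx.1)
  have hfmeas : ∀ n, AEStronglyMeasurable f
      (volume.restrict (Set.Ico (t n) (t (n + 1)))) := by
    intro n
    have hα : AEMeasurable α (volume.restrict (Set.Ico (t n) (t (n + 1)))) :=
      aemeasurable_restrict_of_antitoneOn measurableSet_Ico (hmono.mono (hsub n))
    have h1 : AEMeasurable (fun x => α x * |Real.log (α x)|)
        (volume.restrict (Set.Ico (t n) (t (n + 1)))) :=
      hα.mul (by
        simpa [Real.norm_eq_abs] using (Real.measurable_log.comp_aemeasurable hα).norm)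
    have h2 : AEMeasurable (fun x : ℝ => x * Real.log x)
        (volume.restrict (Set.Ico (t n) (t (n + 1)))) :=
      (measurable_id.mul Real.measurable_log).aemeasurable
    exact (h1.div h2).aestronglyMeasurable
  -- integrability of f on each block
  have hgint : ∀ n, IntegrableOn (fun x => c n * (x * Real.log x)⁻¹)
      (Set.Ico (t n) (t (n + 1))) := by
    intro n
    exact (((hcont n).integrableOn_Icc).mono_set Set.Ico_subset_Icc_self).const_mul (c n)
  have hfint : ∀ n, N ≤ n → IntegrableOn f (Set.Ico (t n) (t (n + 1))) := by
    intro n hn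
    apply Integrable.mono' (hgint n) (hfmeas n)
    rw [MeasureTheory.ae_restrict_iff' measurableSet_Ico]
    apply Filter.Eventually.of_forall
    intro x hx
    have h1x : 1 < x := (ht1 n).trans_le hx.1
    rw [Real.norm_eq_abs, abs_of_nonneg (hfnonneg x h1x)]
    exact hfb n hn x hx
  -- norm integral bound
  have hnormint : ∀ n, N ≤ n → (∫ x in Set.Ico (t n) (t (n + 1)), ‖f x‖) ≤ c n := by
    intro n hn
    have h1 : (∫ x in Set.Ico (t n) (t (n + 1)), ‖f x‖) ≤
        ∫ x in Set.Ico (t n) (t (n + 1)), c n * (x * Real.log x)⁻¹ := by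
      apply MeasureTheory.setIntegral_mono_on (hfint n hn).norm (hgint n) measurableSet_Ico
      intro x hx
      have h1x : 1 < x := (ht1 n).trans_le hx.1
      rw [Real.norm_eq_abs, abs_of_nonneg (hfnonneg x h1x)]
      exact hfb n hn x hx
    rw [MeasureTheory.integral_const_mul, hIint n, mul_one] at h1
    exact h1
  -- summability of c along the tail
  have hbsum : Summable b := Summable.add_compl hs part2
  have hc_le : ∀ n, N ≤ n → c n ≤ (1 + Real.log 2) * b n := by
    intro n hn
    have hA : (1:ℝ) ≤ |Real.log (α (t n))| := by
      have := hlogneg n hn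
      rw [abs_of_nonpos (by linarith)]
      linarith
    have hl2 : (0:ℝ) ≤ Real.log 2 := Real.log_nonneg one_le_two
    have haN : 0 < α (t n) := hpos _ (htpos n)
    simp only [hc_def, hb_def]
    nlinarith [mul_le_mul_of_nonneg_left hA (mul_nonneg haN.le hl2)]
  have hshift : Summable (fun k : ℕ => (1 + Real.log 2) * b (k + N)) :=
    ((summable_nat_add_iff N).2 hbsum).mul_left _
  have hsumInt : Summable (fun k : ℕ =>
      ∫ x in Set.Ico (t (k + N)) (t (k + N + 1)), ‖f x‖) := by
    apply Summable.of_nonneg_of_le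
      (fun k => MeasureTheory.integral_nonneg fun x => norm_nonneg _)
      (fun k => ?_) hshift
    exact (hnormint (k + N) (by omega)).trans (hc_le (k + N) (by omega))
  -- integrability on the union
  have hiu : IntegrableOn f (⋃ k : ℕ, Set.Ico (t (k + N)) (t (k + N + 1))) :=
    integrableOn_iUnion_of_summable_integral_norm
      (fun k => hfint (k + N) (by omega)) hsumInt
  -- coverage
  have hcover : Set.Ici (t N) ⊆ ⋃ k : ℕ, Set.Ico (t (k + N)) (t (k + N + 1)) := by
    intro x hx
    have hex : ∃ k : ℕ, x < t (k + N + 1) := by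
      obtain ⟨m, hm⟩ := (httop.eventually_gt_atTop x).exists_forall_of_atTop
      exact ⟨m, hm (m + N + 1) (by omega)⟩
    refine Set.mem_iUnion.2 ⟨Nat.find hex, ?_, Nat.find_spec hex⟩
    rcases Nat.eq_zero_or_pos (Nat.find hex) with h0 | hpos'
    · rw [h0]
      simpa using hx
    · obtain ⟨k, hk⟩ := Nat.exists_eq_succ_of_ne_zero (Nat.pos_iff_ne_zero.1 hpos')
      have := Nat.find_min hex (m := k) (by omega)
      rw [hk]
      have heq : k + N + 1 = k + 1 + N := by omega
      rw [← heq]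
      exact not_lt.1 this
  refine ⟨t N, ?_, hiu.mono_set hcover⟩
  rw [ht]
  apply Real.exp_lt_exp.2
  have h1 : (1:ℝ) ≤ (N:ℝ) := by exact_mod_cast hN1
  have := Real.add_one_le_exp (N:ℝ)
  linarith
end

section
/- Suppose events (A_n) satisfy: there is a constant C such that for all j > k either P(A_j ∩ A_k) = P(A_j)P(A_k) or P(A_j ∩ A_k) ≤ P(A_j) c_{k,j} with Σ_{k < j} c_{k,j} ≤ C for every j. If Σ P(A_n) = ∞, then Σ_{j,k≤n} P(A_j ∩ A_k) ≤ (Σ_{j≤n} P(A_j))² + (2C+1) Σ_{j≤n} P(A_j), so the Kochen–Stone condition liminf (Σ_{j,k≤n} P(A_j∩A_k))/(Σ_{j≤n} P(A_j))² < ∞ holds. -/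
open MeasureTheory ProbabilityTheory Filter

theorem statement_19 {Ω : Type*} [MeasureSpace Ω] [IsProbabilityMeasure (ℙ : Measure Ω)]
    (A : ℕ → Set Ω) (hA : ∀ n, MeasurableSet (A n))
    (c : ℕ → ℕ → ENNReal) (C : ENNReal) (hC : C ≠ ⊤)
    (hpair : ∀ j k, k < j →
      ℙ (A j ∩ A k) = ℙ (A j) * ℙ (A k) ∨ ℙ (A j ∩ A k) ≤ ℙ (A j) * c k j)
    (hsum : ∀ j, ∑ k ∈ Finset.range j, c k j ≤ C)
    (hdiv : ∑' n, ℙ (A n) = ⊤) :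
    (∀ n, ∑ j ∈ Finset.range n, ∑ k ∈ Finset.range n, ℙ (A j ∩ A k) ≤
        (∑ j ∈ Finset.range n, ℙ (A j)) ^ 2 +
          (2 * C + 1) * ∑ j ∈ Finset.range n, ℙ (A j)) ∧
    Filter.liminf
        (fun n => (∑ j ∈ Finset.range n, ∑ k ∈ Finset.range n, ℙ (A j ∩ A k)) /
          (∑ j ∈ Finset.range n, ℙ (A j)) ^ 2) atTop < ⊤ := by
  set p : ℕ → ENNReal := fun j => ℙ (A j) with hp
  set S : ℕ → ENNReal := fun n => ∑ j ∈ Finset.range n, p j with hS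
  have hterm : ∀ j k, ℙ (A j ∩ A k) ≤
      p j * p k + ((if k < j then p j * c k j else 0)
        + (if j < k then p k * c j k else 0) + (if j = k then p j else 0)) := by
    intro j k
    rcases lt_trichotomy k j with h | h | h
    · have h1 : ¬ j < k := by omega
      have h2 : j ≠ k := by omega
      simp only [if_pos h, if_neg h1, if_neg h2, add_zero]
      rcases hpair j k h with heq | hle
      · rw [heq]; exact le_self_add
      · exact le_trans hle (le_add_self)
    · subst h
      have h1 : ¬ k < k := lt_irrefl k
      simp only [if_neg h1, if_pos rfl, zero_add, Set.inter_self]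
      exact le_add_self
    · have h1 : ¬ k < j := by omega
      have h2 : j ≠ k := by omega
      simp only [if_neg h1, if_pos h, if_neg h2, add_zero, zero_add]
      rw [Set.inter_comm]
      rcases hpair k j h with heq | hle
      · rw [heq, mul_comm]; exact le_self_add
      · exact le_trans hle (le_add_self)
  have key : ∀ n, ∑ j ∈ Finset.range n, ∑ k ∈ Finset.range n, ℙ (A j ∩ A k) ≤
      (S n) ^ 2 + (2 * C + 1) * S n := by
    intro n
    have step1 : ∑ j ∈ Finset.range n, ∑ k ∈ Finset.range n, ℙ (A j ∩ A k) ≤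
        ∑ j ∈ Finset.range n, ∑ k ∈ Finset.range n,
          (p j * p k + ((if k < j then p j * c k j else 0)
            + (if j < k then p k * c j k else 0) + (if j = k then p j else 0))) :=
      Finset.sum_le_sum fun j _ => Finset.sum_le_sum fun k _ => hterm j k
    refine step1.trans ?_
    have hsplit : ∑ j ∈ Finset.range n, ∑ k ∈ Finset.range n,
        (p j * p k + ((if k < j then p j * c k j else 0)
          + (if j < k then p k * c j k else 0) + (if j = k then p j else 0)))
        = (∑ j ∈ Finset.range n, ∑ k ∈ Finset.range n, p j * p k)
          + ((∑ j ∈ Finset.range n, ∑ k ∈ Finset.range n, if k < j then p j * c k j else 0)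
          + (∑ j ∈ Finset.range n, ∑ k ∈ Finset.range n, if j < k then p k * c j k else 0)
          + (∑ j ∈ Finset.range n, ∑ k ∈ Finset.range n, if j = k then p j else 0)) := by
      simp [Finset.sum_add_distrib]
    rw [hsplit]
    have hsq : ∑ j ∈ Finset.range n, ∑ k ∈ Finset.range n, p j * p k = (S n) ^ 2 := by
      rw [sq, Finset.sum_mul_sum]
    have inner_bound : ∀ j, (∑ k ∈ Finset.range n, if k < j then c k j else 0) ≤ C := by
      intro j
      calc ∑ k ∈ Finset.range n, (if k < j then c k j else 0)
          = ∑ k ∈ (Finset.range n).filter (· < j), c k j := by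
            rw [Finset.sum_filter]
        _ ≤ ∑ k ∈ Finset.range j, c k j := by
            apply Finset.sum_le_sum_of_subset
            intro k hk
            simp only [Finset.mem_filter, Finset.mem_range] at hk ⊢
            exact hk.2
        _ ≤ C := hsum j
    have h1 : (∑ j ∈ Finset.range n, ∑ k ∈ Finset.range n, if k < j then p j * c k j else 0)
        ≤ C * S n := by
      calc ∑ j ∈ Finset.range n, ∑ k ∈ Finset.range n, (if k < j then p j * c k j else 0)
          = ∑ j ∈ Finset.range n, p j * ∑ k ∈ Finset.range n, (if k < j then c k j else 0) := by
            refine Finset.sum_congr rfl fun j _ => ?_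
            rw [Finset.mul_sum]
            exact Finset.sum_congr rfl fun k _ => by split <;> simp
        _ ≤ ∑ j ∈ Finset.range n, p j * C :=
            Finset.sum_le_sum fun j _ => mul_le_mul_right (inner_bound j) _
        _ = C * S n := by rw [← Finset.sum_mul, mul_comm]
    have h2 : (∑ j ∈ Finset.range n, ∑ k ∈ Finset.range n, if j < k then p k * c j k else 0)
        ≤ C * S n := by
      rw [Finset.sum_comm]
      calc ∑ k ∈ Finset.range n, ∑ j ∈ Finset.range n, (if j < k then p k * c j k else 0)
          = ∑ k ∈ Finset.range n, p k * ∑ j ∈ Finset.range n, (if j < k then c j k else 0) := by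
            refine Finset.sum_congr rfl fun k _ => ?_
            rw [Finset.mul_sum]
            exact Finset.sum_congr rfl fun j _ => by split <;> simp
        _ ≤ ∑ k ∈ Finset.range n, p k * C :=
            Finset.sum_le_sum fun k _ => mul_le_mul_right (inner_bound k) _
        _ = C * S n := by rw [← Finset.sum_mul, mul_comm]
    have h3 : (∑ j ∈ Finset.range n, ∑ k ∈ Finset.range n, if j = k then p j else 0)
        = S n := by
      refine Finset.sum_congr rfl fun j hj => ?_
      rw [Finset.sum_ite_eq (Finset.range n) j (fun _ => p j), if_pos hj]
    rw [hsq, h3]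
    have : C * S n + C * S n + S n = (2 * C + 1) * S n := by ring
    calc (S n) ^ 2 + ((∑ j ∈ Finset.range n, ∑ k ∈ Finset.range n, if k < j then p j * c k j else 0)
          + (∑ j ∈ Finset.range n, ∑ k ∈ Finset.range n, if j < k then p k * c j k else 0) + S n)
        ≤ (S n) ^ 2 + (C * S n + C * S n + S n) := by
          gcongr
      _ = (S n) ^ 2 + (2 * C + 1) * S n := by rw [this]
  refine ⟨key, ?_⟩
  -- S n tends to ⊤
  have hSfin : ∀ n, S n ≠ ⊤ := by
    intro n
    have : S n ≤ ∑ _j ∈ Finset.range n, (1 : ENNReal) :=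
      Finset.sum_le_sum fun j _ => prob_le_one
    simp only [Finset.sum_const, Finset.card_range, nsmul_eq_mul, mul_one] at this
    exact ne_top_of_le_ne_top (by simp) this
  have htends : Filter.Tendsto S atTop (nhds ⊤) := by
    rw [hS]
    have := ENNReal.tendsto_nat_tsum p
    rwa [hdiv] at this
  have hM : (2 * C + 1) < ⊤ := by
    refine ENNReal.add_lt_top.mpr ⟨?_, by simp⟩
    exact ENNReal.mul_lt_top (by simp) hC.lt_top
  have hev : ∀ᶠ n in atTop, 2 * C + 1 ≤ S n ∧ 1 ≤ S n := by
    have h1 : ∀ᶠ n in atTop, 2 * C + 1 < S n :=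
      htends.eventually (eventually_gt_nhds hM)
    have h2 : ∀ᶠ n in atTop, (1 : ENNReal) < S n :=
      htends.eventually (eventually_gt_nhds (by simp))
    filter_upwards [h1, h2] with n hn1 hn2
    exact ⟨hn1.le, hn2.le⟩
  have hratio : ∀ᶠ n in atTop,
      (∑ j ∈ Finset.range n, ∑ k ∈ Finset.range n, ℙ (A j ∩ A k)) / (S n) ^ 2 ≤ 2 := by
    filter_upwards [hev] with n ⟨hn1, hn2⟩
    have hS0 : (S n) ^ 2 ≠ 0 := by
      apply pow_ne_zero
      exact fun h => by simp [h] at hn2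
    have hStop : (S n) ^ 2 ≠ ⊤ := by
      exact fun h => (hSfin n) (by simpa using ENNReal.pow_eq_top_iff.mp h |>.1)
    calc (∑ j ∈ Finset.range n, ∑ k ∈ Finset.range n, ℙ (A j ∩ A k)) / (S n) ^ 2
        ≤ ((S n) ^ 2 + (2 * C + 1) * S n) / (S n) ^ 2 :=
          ENNReal.div_le_div_right (key n) _
      _ ≤ ((S n) ^ 2 + S n * S n) / (S n) ^ 2 := by
          gcongr
      _ = (2 * (S n) ^ 2) / (S n) ^ 2 := by rw [sq]; ring_nf
      _ = 2 * ((S n) ^ 2 / (S n) ^ 2) := by rw [mul_div_assoc]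
      _ = 2 := by rw [ENNReal.div_self hS0 hStop, mul_one]
  have hliminf : Filter.liminf
      (fun n => (∑ j ∈ Finset.range n, ∑ k ∈ Finset.range n, ℙ (A j ∩ A k)) /
        (∑ j ∈ Finset.range n, p j) ^ 2) atTop ≤ 2 := by
    calc Filter.liminf (fun n => (∑ j ∈ Finset.range n, ∑ k ∈ Finset.range n, ℙ (A j ∩ A k)) /
          (∑ j ∈ Finset.range n, p j) ^ 2) atTop
        ≤ Filter.liminf (fun _ => (2 : ENNReal)) atTop := Filter.liminf_le_liminf hratio
      _ = 2 := Filter.liminf_const 2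
  exact lt_of_le_of_lt hliminf (by simp)
end
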